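/- arXiv:2107.14320 — 5 statements merged into one kernel-verified Lean document; each statement's English description precedes it below -/
import Mathlib

section
/- For every integer m ≥ 3, all rational numbers x_α and y_α, every τ in the upper half plane, and every matrix γ = [[a,b],[c,d]] ∈ SL₂(ℤ), one has G_{m,α}((aτ+b)/(cτ+d)) = (cτ+d)^m · G_{m,αγ}(τ), where αγ is the pair of rationals (d·x_α + b·y_α, c·x_α + a·y_α). -/
open Complex Filter
open scoped MatrixGroups

/-- Right multiplication by `γ` as an equivalence of `ℤ × ℤ`. -/
def rmulSL2 (γ : SL(2,ℤ)) : ℤ × ℤ ≃ ℤ × ℤ where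
  toFun p := (p.1 * γ 0 0 + p.2 * γ 1 0, p.1 * γ 0 1 + p.2 * γ 1 1)
  invFun q := (q.1 * γ 1 1 - q.2 * γ 1 0, -(q.1 * γ 0 1) + q.2 * γ 0 0)
  left_inv p := by
    have h : (γ : Matrix (Fin 2) (Fin 2) ℤ) 0 0 * γ 1 1 - γ 0 1 * γ 1 0 = 1 := by
      have := γ.2; rw [Matrix.det_fin_two] at this; exact this
    refine Prod.ext ?_ ?_ <;> simp only
    · linear_combination p.1 * h
    · linear_combination p.2 * h
  right_inv q := by
    have h : (γ : Matrix (Fin 2) (Fin 2) ℤ) 0 0 * γ 1 1 - γ 0 1 * γ 1 0 = 1 := by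
      have := γ.2; rw [Matrix.det_fin_two] at this; exact this
    refine Prod.ext ?_ ?_ <;> simp only
    · linear_combination q.1 * h
    · linear_combination q.2 * h

lemma rmulSL2_zero : ∀ (γ : SL(2,ℤ)), rmulSL2 γ 0 = 0 := by
  intro γ
  refine Prod.ext ?_ ?_ <;> simp [rmulSL2]

lemma rmulSL2_eq_zero_iff (γ : SL(2,ℤ)) (p : ℤ × ℤ) : rmulSL2 γ p = 0 ↔ p = 0 := by
  constructor
  · intro h; exact (rmulSL2 γ).injective (h.trans (rmulSL2_zero γ).symm)
  · rintro rfl; exact rmulSL2_zero γ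

lemma linear_ne_zero' (τ : UpperHalfPlane) (k l : ℤ) (h : (k, l) ≠ (0 : ℤ × ℤ)) :
    (k : ℂ) * τ + l ≠ 0 := by
  have := UpperHalfPlane.linear_ne_zero (cd := ![(k:ℝ), (l:ℝ)]) τ (by
    intro hc
    apply h
    have h0 := congrFun hc 0
    have h1 := congrFun hc 1
    simp only [Matrix.cons_val_zero, Matrix.cons_val_one, Matrix.head_cons, Pi.zero_apply,
      Int.cast_eq_zero] at h0 h1
    simp [Prod.ext_iff, h0, h1])
  simpa using this

/-- The level `N` Eisenstein series
`G_{m,α}(τ) = ∑_{(k,ℓ) ≠ (0,0)} e^{2πi(k x_α − ℓ y_α)}/(kτ+ℓ)^m` for `α = (x_α, y_α)`. -/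
noncomputable def eisG (m : ℕ) (xα yα : ℚ) (τ : UpperHalfPlane) : ℂ :=
  ∑' p : {p : ℤ × ℤ // p ≠ 0},
    Complex.exp (2 * Real.pi * I * ((p.1.1 : ℂ) * (xα : ℂ) - (p.1.2 : ℂ) * (yα : ℂ))) /
      ((p.1.1 : ℂ) * (τ : ℂ) + (p.1.2 : ℂ)) ^ m

/-- Modularity of level `N` Eisenstein series: for `m ≥ 3`, `γ = [[a,b],[c,d]] ∈ SL₂(ℤ)`,
`G_{m,α}(γτ) = (cτ+d)^m G_{m,αγ}(τ)` where `αγ = (d x_α + b y_α, c x_α + a y_α)`. -/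
theorem eisG_modular (m : ℕ) (hm : 3 ≤ m) (xα yα : ℚ) (τ : UpperHalfPlane) (γ : SL(2,ℤ)) :
    eisG m xα yα (γ • τ) =
      (((γ : Matrix (Fin 2) (Fin 2) ℤ) 1 0 : ℂ) * (τ : ℂ)
          + ((γ : Matrix (Fin 2) (Fin 2) ℤ) 1 1 : ℂ)) ^ m *
        eisG m
          (((γ : Matrix (Fin 2) (Fin 2) ℤ) 1 1 : ℚ) * xα
            + ((γ : Matrix (Fin 2) (Fin 2) ℤ) 0 1 : ℚ) * yα)
          (((γ : Matrix (Fin 2) (Fin 2) ℤ) 1 0 : ℚ) * xα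
            + ((γ : Matrix (Fin 2) (Fin 2) ℤ) 0 0 : ℚ) * yα) τ := by
  set a : ℤ := (γ : Matrix (Fin 2) (Fin 2) ℤ) 0 0 with ha
  set b : ℤ := (γ : Matrix (Fin 2) (Fin 2) ℤ) 0 1 with hb
  set c : ℤ := (γ : Matrix (Fin 2) (Fin 2) ℤ) 1 0 with hc
  set d : ℤ := (γ : Matrix (Fin 2) (Fin 2) ℤ) 1 1 with hd
  have hdet : a * d - b * c = 1 := by
    have := γ.2; rw [Matrix.det_fin_two] at this; exact this
  have hdenom : (c : ℂ) * τ + d ≠ 0 := by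
    apply linear_ne_zero' τ c d
    intro hcd
    rw [Prod.ext_iff] at hcd
    simp only at hcd
    rw [hcd.1, hcd.2] at hdet
    simp at hdet
  have hcoe : ((γ • τ : UpperHalfPlane) : ℂ) = ((a : ℂ) * τ + b) / ((c : ℂ) * τ + d) := by
    rw [UpperHalfPlane.specialLinearGroup_apply]; rfl
  let e : {p : ℤ × ℤ // p ≠ 0} ≃ {p : ℤ × ℤ // p ≠ 0} :=
    (rmulSL2 γ).subtypeEquiv (fun p => not_congr (rmulSL2_eq_zero_iff γ p).symm)
  unfold eisG
  rw [← tsum_mul_left]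
  conv_rhs => rw [← Equiv.tsum_eq e]
  apply tsum_congr
  rintro ⟨⟨k, l⟩, hp⟩
  have hep : ((e ⟨(k, l), hp⟩ : {p : ℤ × ℤ // p ≠ 0}) : ℤ × ℤ)
      = (k * a + l * c, k * b + l * d) := by
    simp [e, rmulSL2]
    exact ⟨rfl, rfl⟩
  rw [hep, hcoe]
  simp only
  have hq : ((k * a + l * c : ℤ), (k * b + l * d : ℤ)) ≠ (0 : ℤ × ℤ) := by
    have := (rmulSL2_eq_zero_iff γ (k, l)).not.mpr hp
    simpa [rmulSL2] using this
  have hden2 : ((k * a + l * c : ℤ) : ℂ) * τ + ((k * b + l * d : ℤ) : ℂ) ≠ 0 :=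
    linear_ne_zero' τ _ _ hq
  have hdetC : (a : ℂ) * d - b * c = 1 := by exact_mod_cast congrArg (Int.cast : ℤ → ℂ) hdet
  have hexp : Complex.exp (2 * Real.pi * I * ((k : ℂ) * (xα : ℂ) - (l : ℂ) * (yα : ℂ))) =
      Complex.exp (2 * Real.pi * I *
        (((k * a + l * c : ℤ) : ℂ) * (((d : ℚ) * xα + (b : ℚ) * yα : ℚ) : ℂ) -
          ((k * b + l * d : ℤ) : ℂ) * (((c : ℚ) * xα + (a : ℚ) * yα : ℚ) : ℂ))) := by
    congr 1
    push_cast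
    linear_combination (-(2 * (Real.pi : ℂ) * I) * ((k : ℂ) * xα - (l : ℂ) * yα)) * hdetC
  rw [hexp]
  have hden : ((k : ℂ) * (((a : ℂ) * τ + b) / ((c : ℂ) * τ + d)) + l) =
      (((k * a + l * c : ℤ) : ℂ) * τ + ((k * b + l * d : ℤ) : ℂ)) / ((c : ℂ) * τ + d) := by
    rw [mul_div_assoc', div_add' _ _ _ hdenom]
    push_cast
    ring
  rw [hden, div_pow, div_div_eq_mul_div, mul_comm, mul_div_assoc]
end

section
/- For every integer m ≥ 3 and all rational numbers x_α, y_α, the Eisenstein series G_{m,α}(τ) tends to −(−2πi)^m · B_m({y_α})/m! as Im τ → ∞, where B_m is the m-th Bernoulli polynomial and {y_α} ∈ [0,1) denotes the fractional part of y_α. -/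
open Complex Filter

namespace EisAux

open EisensteinSeries

/-- The summand of `eisG`. -/
noncomputable def term (m : ℕ) (xα yα : ℚ) (τ : UpperHalfPlane) (p : ℤ × ℤ) : ℂ :=
  Complex.exp (2 * Real.pi * Complex.I * ((p.1 : ℂ) * (xα : ℂ) - (p.2 : ℂ) * (yα : ℂ))) /
    ((p.1 : ℂ) * (τ : ℂ) + (p.2 : ℂ)) ^ m

/-- The vector `![p.1, p.2]`. -/
def vec (p : ℤ × ℤ) : Fin 2 → ℤ := ![p.1, p.2]

lemma vec_injective : Function.Injective vec := by
  intro p q h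
  have h0 := congrFun h 0
  have h1 := congrFun h 1
  simp only [vec, Matrix.cons_val_zero, Matrix.cons_val_one, Matrix.head_cons] at h0 h1
  exact Prod.ext h0 h1

lemma vec_ne_zero {p : ℤ × ℤ} (hp : p ≠ 0) : vec p ≠ 0 := by
  intro h
  apply hp
  have h0 := congrFun h 0
  have h1 := congrFun h 1
  simp only [vec, Matrix.cons_val_zero, Matrix.cons_val_one, Matrix.head_cons,
    Pi.zero_apply] at h0 h1
  exact Prod.ext h0 h1

lemma norm_term (m : ℕ) (xα yα : ℚ) (τ : UpperHalfPlane) (p : ℤ × ℤ) :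
    ‖term m xα yα τ p‖ = 1 / ‖(p.1 : ℂ) * (τ : ℂ) + (p.2 : ℂ)‖ ^ m := by
  have harg : 2 * (Real.pi : ℂ) * I * ((p.1 : ℂ) * (xα : ℂ) - (p.2 : ℂ) * (yα : ℂ)) =
      ((2 * Real.pi * ((p.1 : ℝ) * (xα : ℝ) - (p.2 : ℝ) * (yα : ℝ)) : ℝ) : ℂ) * Complex.I := by
    push_cast
    ring
  rw [term, norm_div, harg,
    Complex.norm_exp_ofReal_mul_I, norm_pow]

lemma summable_norm_term (m : ℕ) (hm : 3 ≤ m) (xα yα : ℚ) (τ : UpperHalfPlane) :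
    Summable fun p : {p : ℤ × ℤ // p ≠ 0} => ‖term m xα yα τ p.1‖ := by
  have h := (EisensteinSeries.summable_norm_eisSummand (k := m) (by exact_mod_cast hm) τ)
  have h2 : Summable fun p : {p : ℤ × ℤ // p ≠ 0} => ‖eisSummand m (vec p.1) τ‖ :=
    h.comp_injective (vec_injective.comp Subtype.val_injective)
  apply h2.congr
  intro p
  simp only [Function.comp_apply, eisSummand, vec, Matrix.cons_val_zero, Matrix.cons_val_one,
    Matrix.head_cons, norm_term]
  rw [norm_zpow, zpow_neg, zpow_natCast, one_div]

lemma summable_term (m : ℕ) (hm : 3 ≤ m) (xα yα : ℚ) (τ : UpperHalfPlane) :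
    Summable fun p : {p : ℤ × ℤ // p ≠ 0} => term m xα yα τ p.1 :=
  (summable_norm_term m hm xα yα τ).of_norm


set_option maxHeartbeats 1000000 in
lemma hasSum_const (m : ℕ) (hm : 3 ≤ m) (yα : ℚ) :
    HasSum (fun ℓ : {ℓ : ℤ // ℓ ≠ 0} =>
        Complex.exp (-(2 * Real.pi * Complex.I * (ℓ.1 : ℂ) * (yα : ℂ))) / (ℓ.1 : ℂ) ^ m)
      (-((-(2 * Real.pi * Complex.I)) ^ m *
        (((Polynomial.bernoulli m).eval (Int.fract yα) : ℚ) : ℂ) / (Nat.factorial m : ℂ))) := by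
  set xf : ℝ := Int.fract (yα : ℝ) with hxf
  have hx : xf ∈ Set.Icc (0:ℝ) 1 := ⟨Int.fract_nonneg _, (Int.fract_lt_one _).le⟩
  have h1 := hasSum_one_div_pow_mul_fourier_mul_bernoulliFun (k := m) (by omega) hx
  have h2 : HasSum (fun n : ℤ => 1 / ((-n : ℤ) : ℂ) ^ m * fourier (-n) (xf : UnitAddCircle))
      (-(2 * (Real.pi : ℂ) * Complex.I) ^ m / (Nat.factorial m : ℂ) * (bernoulliFun m xf : ℂ)) :=
    (Equiv.neg ℤ).hasSum_iff.mpr h1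
  have h3 := h2.mul_left ((-1 : ℂ) ^ m)
  have key : (fun n : ℤ => ((-1 : ℂ) ^ m) *
        (1 / ((-n : ℤ) : ℂ) ^ m * fourier (-n) (xf : UnitAddCircle)))
      = fun n : ℤ => Complex.exp (-(2 * Real.pi * Complex.I * (n : ℂ) * (yα : ℂ))) / (n : ℂ) ^ m := by
    funext n
    rcases eq_or_ne n 0 with rfl | hn
    · simp [zero_pow (by omega : m ≠ 0)]
    · rw [fourier_coe_apply]
      have hexp : Complex.exp (2 * Real.pi * Complex.I * ((-n : ℤ) : ℂ) * (xf : ℂ) / ((1:ℝ) : ℂ))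
          = Complex.exp (-(2 * Real.pi * Complex.I * (n : ℂ) * (yα : ℂ))) := by
        rw [← mul_one (Complex.exp (-(2 * Real.pi * Complex.I * (n : ℂ) * (yα : ℂ)))),
          ← Complex.exp_int_mul_two_pi_mul_I (n * ⌊(yα : ℝ)⌋), ← Complex.exp_add]
        congr 1
        have hy : ((yα : ℝ) : ℂ) = (xf : ℂ) + ((⌊(yα : ℝ)⌋ : ℤ) : ℂ) := by
          rw [hxf]; push_cast [Int.fract]; ring
        have hy2 : (yα : ℂ) = (xf : ℂ) + ((⌊(yα : ℝ)⌋ : ℤ) : ℂ) := by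
          rw [← hy]; norm_cast
        rw [hy2]; push_cast; ring
      rw [hexp]
      have hden : ((-n : ℤ) : ℂ) ^ m = (-1 : ℂ) ^ m * (n : ℂ) ^ m := by
        push_cast; rw [neg_pow]
      rw [hden]
      have hne : ((-1 : ℂ) ^ m) ≠ 0 := pow_ne_zero _ (by norm_num)
      field_simp
  rw [key] at h3
  have hB : ((bernoulliFun m xf : ℝ) : ℂ) =
      (((Polynomial.bernoulli m).eval (Int.fract yα) : ℚ) : ℂ) := by
    have : bernoulliFun m xf = (((Polynomial.bernoulli m).eval (Int.fract yα) : ℚ) : ℝ) := by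
      rw [bernoulliFun, hxf, ← Rat.cast_fract,
        show ((Int.fract yα : ℚ) : ℝ) = algebraMap ℚ ℝ (Int.fract yα) from (eq_ratCast _ _).symm,
        Polynomial.eval_map, Polynomial.eval₂_at_apply, eq_ratCast]
    rw [this]
    norm_cast
  have htarget : ((-1 : ℂ) ^ m) *
      (-(2 * (Real.pi : ℂ) * Complex.I) ^ m / (Nat.factorial m : ℂ) * (bernoulliFun m xf : ℂ))
      = -((-(2 * Real.pi * Complex.I)) ^ m *
        (((Polynomial.bernoulli m).eval (Int.fract yα) : ℚ) : ℂ) / (Nat.factorial m : ℂ)) := by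
    rw [← hB, neg_pow (2 * (Real.pi : ℂ) * Complex.I)]
    ring
  rw [htarget] at h3
  have hsupp : Function.support (fun n : ℤ =>
      Complex.exp (-(2 * Real.pi * Complex.I * (n : ℂ) * (yα : ℂ))) / (n : ℂ) ^ m)
      ⊆ {n : ℤ | n ≠ 0} := by
    intro n hn
    simp only [Function.mem_support, ne_eq, Set.mem_setOf_eq] at hn ⊢
    rintro rfl
    simp [zero_pow (by omega : m ≠ 0)] at hn
  exact (hasSum_subtype_iff_of_support_subset hsupp).mpr h3


/-- The `k ≠ 0` part of the Eisenstein summand. -/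
noncomputable def Hterm (m : ℕ) (xα yα : ℚ) (τ : UpperHalfPlane) (p : {p : ℤ × ℤ // p ≠ 0}) : ℂ :=
  if p.1.1 = 0 then 0 else term m xα yα τ p.1

/-- The `k ≠ 0` part of the Eisenstein series. -/
noncomputable def Hsum (m : ℕ) (xα yα : ℚ) (τ : UpperHalfPlane) : ℂ :=
  ∑' p, Hterm m xα yα τ p

/-- The shear `(k, ℓ) ↦ (k, ℓ - k c)`. -/
def shiftEquiv (c : ℤ) : {p : ℤ × ℤ // p ≠ 0} ≃ {p : ℤ × ℤ // p ≠ 0} where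
  toFun p := ⟨(p.1.1, p.1.2 - p.1.1 * c), fun h => p.2 (by
    rw [Prod.mk_eq_zero] at h
    obtain ⟨h1, h2⟩ := h
    rw [h1, zero_mul, sub_zero] at h2
    exact Prod.ext h1 h2)⟩
  invFun p := ⟨(p.1.1, p.1.2 + p.1.1 * c), fun h => p.2 (by
    rw [Prod.mk_eq_zero] at h
    obtain ⟨h1, h2⟩ := h
    rw [h1, zero_mul, add_zero] at h2
    exact Prod.ext h1 h2)⟩
  left_inv p := Subtype.ext (by simp)
  right_inv p := Subtype.ext (by simp)

lemma Hsum_periodic (m : ℕ) (xα yα : ℚ) (n : ℤ) (τ : UpperHalfPlane) :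
    Hsum m xα yα ((((n * (yα.den : ℤ)) : ℤ) : ℝ) +ᵥ τ) = Hsum m xα yα τ := by
  set c : ℤ := n * (yα.den : ℤ) with hc
  have hcy : (c : ℂ) * (yα : ℂ) = ((n * yα.num : ℤ) : ℂ) := by
    have h0 : (yα : ℂ) * ((yα.den : ℕ) : ℂ) = ((yα.num : ℤ) : ℂ) := by
      exact_mod_cast congrArg (fun q : ℚ => (q : ℂ)) (Rat.mul_den_eq_num yα)
    push_cast at h0 ⊢
    rw [hc]
    push_cast
    linear_combination (n : ℂ) * h0
  rw [Hsum, Hsum, ← (shiftEquiv c).tsum_eq (Hterm m xα yα (((c : ℤ) : ℝ) +ᵥ τ))]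
  apply tsum_congr
  rintro ⟨⟨k, l⟩, hp⟩
  simp only [Hterm, shiftEquiv, Equiv.coe_fn_mk]
  by_cases hk : k = 0
  · simp [hk]
  · simp only [hk, ↓reduceIte]
    simp only [term, UpperHalfPlane.coe_vadd]
    have hnum : Complex.exp (2 * Real.pi * Complex.I *
          ((k : ℂ) * (xα : ℂ) - ((l - k * c : ℤ) : ℂ) * (yα : ℂ)))
        = Complex.exp (2 * Real.pi * Complex.I * ((k : ℂ) * (xα : ℂ) - (l : ℂ) * (yα : ℂ))) := by
      rw [← mul_one (Complex.exp (2 * Real.pi * Complex.I *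
            ((k : ℂ) * (xα : ℂ) - (l : ℂ) * (yα : ℂ)))),
        ← Complex.exp_int_mul_two_pi_mul_I (k * (n * yα.num)), ← Complex.exp_add]
      congr 1
      push_cast at hcy ⊢
      linear_combination (2 * (Real.pi : ℂ) * Complex.I * (k : ℂ)) * hcy
    rw [hnum]
    congr 2
    push_cast
    ring


lemma two_lt_exp (m : ℕ) (hm : 3 ≤ m) : (2 : ℝ) < (m : ℝ) - 1/2 := by
  have : (3 : ℝ) ≤ (m : ℝ) := by exact_mod_cast hm
  linarith

lemma summable_bound (m : ℕ) (hm : 3 ≤ m) {r0 : ℝ} (h0 : 0 < r0) :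
    Summable (fun p : {p : ℤ × ℤ // p ≠ 0} =>
      (r0 * ‖vec p.1‖) ^ (-((m : ℝ) - 1/2))) := by
  have h : Summable (fun p : {p : ℤ × ℤ // p ≠ 0} => ‖vec p.1‖ ^ (-((m : ℝ) - 1/2))) :=
    (EisensteinSeries.summable_one_div_norm_rpow (two_lt_exp m hm)).comp_injective
      (vec_injective.comp Subtype.val_injective)
  apply ((h.mul_left (r0 ^ (-((m : ℝ) - 1/2)))).congr)
  intro p
  rw [← Real.mul_rpow h0.le (norm_nonneg _)]

lemma norm_Hsum_le (m : ℕ) (hm : 3 ≤ m) (xα yα : ℚ) {τ : UpperHalfPlane}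
    (hre : |UpperHalfPlane.re τ| ≤ (yα.den : ℝ)) (him : 1 ≤ UpperHalfPlane.im τ) :
    ‖Hsum m xα yα τ‖ ≤ (UpperHalfPlane.im τ) ^ (-(1/2) : ℝ) *
      ∑' p : {p : ℤ × ℤ // p ≠ 0},
        (EisensteinSeries.r ⟨⟨(yα.den : ℝ), 1⟩, one_pos⟩ * ‖vec p.1‖) ^ (-((m : ℝ) - 1/2)) := by
  set r0 : ℝ := EisensteinSeries.r ⟨⟨(yα.den : ℝ), 1⟩, one_pos⟩ with hr0
  set e : ℝ := (m : ℝ) - 1/2 with he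
  have hr0pos : 0 < r0 := EisensteinSeries.r_pos _
  have himpos : 0 < UpperHalfPlane.im τ := τ.im_pos
  have hptwise : ∀ p : {p : ℤ × ℤ // p ≠ 0},
      ‖Hterm m xα yα τ p‖ ≤ (UpperHalfPlane.im τ) ^ (-(1/2) : ℝ) * (r0 * ‖vec p.1‖) ^ (-e) := by
    intro p
    by_cases hk : p.1.1 = 0
    · rw [Hterm, if_pos hk, norm_zero]
      positivity
    · rw [Hterm, if_neg hk, norm_term]
      set D : ℝ := ‖(p.1.1 : ℂ) * (τ : ℂ) + (p.1.2 : ℂ)‖ with hD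
      have himD : ((p.1.1 : ℂ) * (τ : ℂ) + (p.1.2 : ℂ)).im = (p.1.1 : ℝ) * UpperHalfPlane.im τ := by
        simp [Complex.add_im, Complex.mul_im]
      have hD1 : UpperHalfPlane.im τ ≤ D := by
        calc UpperHalfPlane.im τ ≤ |(p.1.1 : ℝ)| * UpperHalfPlane.im τ :=
              le_mul_of_one_le_left himpos.le (by exact_mod_cast Int.one_le_abs hk)
          _ = |((p.1.1 : ℂ) * (τ : ℂ) + (p.1.2 : ℂ)).im| := by
              rw [himD, abs_mul, _root_.abs_of_nonneg himpos.le]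
          _ ≤ D := Complex.abs_im_le_norm _
      have hD2 : r0 * ‖vec p.1‖ ≤ D := by
        calc r0 * ‖vec p.1‖ ≤ EisensteinSeries.r τ * ‖vec p.1‖ := by
              apply mul_le_mul_of_nonneg_right _ (norm_nonneg _)
              exact EisensteinSeries.r_lower_bound_on_verticalStrip τ one_pos ⟨hre, him⟩
          _ ≤ ‖(vec p.1 0 : ℂ) * (τ : ℂ) + (vec p.1 1 : ℂ)‖ :=
              EisensteinSeries.r_mul_max_le τ (vec_ne_zero p.2)
          _ = D := by rw [hD]; norm_num [vec]
      have hD0 : 0 < D := lt_of_lt_of_le himpos hD1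
      have hvpos : 0 < r0 * ‖vec p.1‖ := by
        apply mul_pos hr0pos
        rw [norm_pos_iff]
        exact vec_ne_zero p.2
      have hkey : (UpperHalfPlane.im τ) ^ ((1/2) : ℝ) * (r0 * ‖vec p.1‖) ^ e ≤ D ^ m := by
        have hDm : (D : ℝ) ^ m = D ^ ((1/2) : ℝ) * D ^ e := by
          rw [← Real.rpow_natCast D m, ← Real.rpow_add hD0]
          norm_num [he]
        rw [hDm]
        have h1 : (UpperHalfPlane.im τ) ^ ((1/2) : ℝ) ≤ D ^ ((1/2) : ℝ) :=
          Real.rpow_le_rpow himpos.le hD1 (by norm_num)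
        have h2 : (r0 * ‖vec p.1‖) ^ e ≤ D ^ e := by
          apply Real.rpow_le_rpow hvpos.le hD2
          have := two_lt_exp m hm
          rw [← he] at this
          linarith
        exact mul_le_mul h1 h2 (Real.rpow_nonneg hvpos.le _) (Real.rpow_nonneg hD0.le _)
      have hlhs_pos : 0 < (UpperHalfPlane.im τ) ^ ((1/2) : ℝ) * (r0 * ‖vec p.1‖) ^ e :=
        mul_pos (Real.rpow_pos_of_pos himpos _) (Real.rpow_pos_of_pos hvpos _)
      calc 1 / D ^ m ≤ 1 / ((UpperHalfPlane.im τ) ^ ((1/2) : ℝ) * (r0 * ‖vec p.1‖) ^ e) :=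
            one_div_le_one_div_of_le hlhs_pos hkey
        _ = (UpperHalfPlane.im τ) ^ (-(1/2) : ℝ) * (r0 * ‖vec p.1‖) ^ (-e) := by
            rw [Real.rpow_neg himpos.le, Real.rpow_neg hvpos.le, one_div, mul_inv]
  have hnorm_summable : Summable (fun p : {p : ℤ × ℤ // p ≠ 0} => ‖Hterm m xα yα τ p‖) := by
    apply (summable_norm_term m hm xα yα τ).of_nonneg_of_le (fun p => norm_nonneg _)
    intro p
    rw [Hterm]
    split
    · simpa using norm_nonneg _
    · exact le_refl _
  have hbsummable : Summable (fun p : {p : ℤ × ℤ // p ≠ 0} =>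
      (UpperHalfPlane.im τ) ^ (-(1/2) : ℝ) * (r0 * ‖vec p.1‖) ^ (-e)) :=
    (summable_bound m hm hr0pos).mul_left _
  calc ‖Hsum m xα yα τ‖ ≤ ∑' p, ‖Hterm m xα yα τ p‖ := norm_tsum_le_tsum_norm hnorm_summable
    _ ≤ ∑' p : {p : ℤ × ℤ // p ≠ 0},
          (UpperHalfPlane.im τ) ^ (-(1/2) : ℝ) * (r0 * ‖vec p.1‖) ^ (-e) :=
        Summable.tsum_le_tsum hptwise hnorm_summable hbsummable
    _ = (UpperHalfPlane.im τ) ^ (-(1/2) : ℝ) * ∑' p : {p : ℤ × ℤ // p ≠ 0},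
          (r0 * ‖vec p.1‖) ^ (-e) := tsum_mul_left

end EisAux

/-- For `m ≥ 3`, `G_{m,α}(τ) → −(−2πi)^m B_m({y_α})/m!` as `Im τ → ∞`, where `B_m` is the
`m`-th Bernoulli polynomial and `{y_α}` is the fractional part of `y_α`. -/
theorem eisG_tendsto_atImInfty (m : ℕ) (hm : 3 ≤ m) (xα yα : ℚ) :
    Tendsto (fun τ : UpperHalfPlane => eisG m xα yα τ) UpperHalfPlane.atImInfty
      (nhds (-((-(2 * Real.pi * I)) ^ m *
        (((Polynomial.bernoulli m).eval (Int.fract yα) : ℚ) : ℂ) / (Nat.factorial m : ℂ)))) := by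
  classical
  set C : ℂ := -((-(2 * Real.pi * I)) ^ m *
    (((Polynomial.bernoulli m).eval (Int.fract yα) : ℚ) : ℂ) / (Nat.factorial m : ℂ)) with hC
  -- decomposition of the series into the `k = 0` part (a constant) and the rest
  have hdecomp : ∀ τ : UpperHalfPlane, eisG m xα yα τ = C + EisAux.Hsum m xα yα τ := by
    intro τ
    have hG : Summable (fun p : {p : ℤ × ℤ // p ≠ 0} =>
        if p.1.1 = 0 then EisAux.term m xα yα τ p.1 else 0) := by
      refine Summable.of_norm_bounded (EisAux.summable_norm_term m hm xα yα τ) fun p => ?_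
      by_cases h : p.1.1 = 0 <;> simp [h]
    have hH : Summable (fun p : {p : ℤ × ℤ // p ≠ 0} => EisAux.Hterm m xα yα τ p) := by
      refine Summable.of_norm_bounded (EisAux.summable_norm_term m hm xα yα τ) fun p => ?_
      rw [EisAux.Hterm]
      by_cases h : p.1.1 = 0 <;> simp [h]
    have hsplit : eisG m xα yα τ = ∑' p : {p : ℤ × ℤ // p ≠ 0},
        ((if p.1.1 = 0 then EisAux.term m xα yα τ p.1 else 0) + EisAux.Hterm m xα yα τ p) := by
      apply tsum_congr
      intro p
      by_cases h : p.1.1 = 0 <;> simp [EisAux.Hterm, h, EisAux.term]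
    rw [hsplit, Summable.tsum_add hG hH, EisAux.Hsum]
    congr 1
    -- the constant part
    have hι : Function.Injective (fun ℓ : {ℓ : ℤ // ℓ ≠ 0} =>
        (⟨(0, ℓ.1), fun h => ℓ.2 (by simpa [Prod.ext_iff] using h)⟩ : {p : ℤ × ℤ // p ≠ 0})) := by
      intro a b h
      apply Subtype.ext
      simpa [Prod.ext_iff, Subtype.ext_iff] using h
    have hsupp : Function.support (fun p : {p : ℤ × ℤ // p ≠ 0} =>
        if p.1.1 = 0 then EisAux.term m xα yα τ p.1 else 0) ⊆
        Set.range (fun ℓ : {ℓ : ℤ // ℓ ≠ 0} =>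
        (⟨(0, ℓ.1), fun h => ℓ.2 (by simpa [Prod.ext_iff] using h)⟩ : {p : ℤ × ℤ // p ≠ 0})) := by
      intro p hp
      rw [Function.mem_support] at hp
      by_cases h0 : p.1.1 = 0
      · have h2 : p.1.2 ≠ 0 := fun h2 => p.2 (Prod.ext h0 h2)
        exact ⟨⟨p.1.2, h2⟩, Subtype.ext (by simp [Prod.ext_iff, h0])⟩
      · simp [h0] at hp
    rw [← Function.Injective.tsum_eq hι hsupp, hC, ← (EisAux.hasSum_const m hm yα).tsum_eq]
    apply tsum_congr
    intro ℓ
    rw [if_pos rfl]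
    show EisAux.term m xα yα τ (0, ℓ.1) = _
    rw [EisAux.term]
    congr 2
    · push_cast
      ring
    · push_cast
      ring
  -- the varying part tends to zero
  have hH0 : Tendsto (fun τ : UpperHalfPlane => EisAux.Hsum m xα yα τ)
      UpperHalfPlane.atImInfty (nhds 0) := by
    set r0 : ℝ := EisensteinSeries.r ⟨⟨(yα.den : ℝ), 1⟩, one_pos⟩ with hr0
    set CB : ℝ := ∑' p : {p : ℤ × ℤ // p ≠ 0},
        (r0 * ‖EisAux.vec p.1‖) ^ (-((m : ℝ) - 1/2)) with hCB
    apply squeeze_zero_norm' (a := fun τ : UpperHalfPlane =>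
      (UpperHalfPlane.im τ) ^ (-(1/2) : ℝ) * CB)
    · rw [eventually_iff, UpperHalfPlane.atImInfty_mem]
      refine ⟨1, fun τ him => ?_⟩
      simp only [Set.mem_setOf_eq]
      -- transport τ into the vertical strip using periodicity
      have hNR : (0 : ℝ) < (yα.den : ℝ) := by positivity
      set k0 : ℤ := ⌊UpperHalfPlane.re τ / (yα.den : ℝ)⌋ with hk0
      set σ : UpperHalfPlane := ((((-k0) * (yα.den : ℤ) : ℤ) : ℝ)) +ᵥ τ with hσ
      have hper : EisAux.Hsum m xα yα σ = EisAux.Hsum m xα yα τ :=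
        EisAux.Hsum_periodic m xα yα (-k0) τ
      have hσre : UpperHalfPlane.re σ = UpperHalfPlane.re τ - (k0 : ℝ) * (yα.den : ℝ) := by
        rw [hσ, UpperHalfPlane.vadd_re]
        push_cast
        ring
      have hσim : UpperHalfPlane.im σ = UpperHalfPlane.im τ := UpperHalfPlane.vadd_im _ _
      have h1 : (k0 : ℝ) * (yα.den : ℝ) ≤ UpperHalfPlane.re τ := by
        rw [hk0]
        have := Int.floor_le (UpperHalfPlane.re τ / (yα.den : ℝ))
        calc (⌊UpperHalfPlane.re τ / (yα.den : ℝ)⌋ : ℝ) * (yα.den : ℝ)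
            ≤ (UpperHalfPlane.re τ / (yα.den : ℝ)) * (yα.den : ℝ) := by
              apply mul_le_mul_of_nonneg_right this hNR.le
          _ = UpperHalfPlane.re τ := by field_simp
      have h2 : UpperHalfPlane.re τ < ((k0 : ℝ) + 1) * (yα.den : ℝ) := by
        rw [hk0]
        have := Int.lt_floor_add_one (UpperHalfPlane.re τ / (yα.den : ℝ))
        calc UpperHalfPlane.re τ = (UpperHalfPlane.re τ / (yα.den : ℝ)) * (yα.den : ℝ) := by
              field_simp
          _ < ((⌊UpperHalfPlane.re τ / (yα.den : ℝ)⌋ : ℝ) + 1) * (yα.den : ℝ) := by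
              apply mul_lt_mul_of_pos_right this hNR
      have hre : |UpperHalfPlane.re σ| ≤ (yα.den : ℝ) := by
        rw [hσre, abs_le]
        constructor <;> nlinarith
      have him' : 1 ≤ UpperHalfPlane.im σ := by rw [hσim]; exact him
      have := EisAux.norm_Hsum_le m hm xα yα hre him'
      rw [hper, hσim] at this
      exact this
    · have h1 : Tendsto UpperHalfPlane.im UpperHalfPlane.atImInfty atTop := tendsto_comap
      have h2 := (tendsto_rpow_neg_atTop (by norm_num : (0:ℝ) < 1/2)).comp h1
      have h3 := h2.mul_const CB
      rw [zero_mul] at h3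
      exact h3
  have hfinal := (tendsto_const_nhds (x := C)
    (f := UpperHalfPlane.atImInfty)).add hH0
  rw [add_zero] at hfinal
  exact hfinal.congr fun τ => (hdecomp τ).symm
end

section
/- Let N ≥ 1 and let L be the free Lie algebra over ℚ on the generators X, Y, and t_β for β ranging over (ℤ/Nℤ)². Then for every α ∈ (ℤ/Nℤ)² and every integer m ≥ 0, the identity [X, ∑_{j+k = m−1, j,k ≥ 0} ∑_{β ∈ (ℤ/Nℤ)²} (−1)^j · [(ad X)^j(t_β), (ad X)^k(t_{α+β})]] = ∑_{β ∈ (ℤ/Nℤ)²} [t_β, (ad X)^m(t_{β+α}) + (−1)^m·(ad X)^m(t_{β−α})] holds in L. (This is the verification that the derivation δ_{m,α}, which annihilates X, sends Y to the inner sum on the left, and sends t_β to the β-summand on the right, satisfies δ_{m,α}([X,Y]) = ∑_β δ_{m,α}(t_β), so that it descends to the quotient Lie algebra 𝔭_N.) -/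
open FreeLieAlgebra

/-- Generators `X`, `Y`, `t_β` (for `β ∈ (ℤ/Nℤ)²`) of the free Lie algebra `L`. -/
inductive KZBGen (N : ℕ) where
  | X : KZBGen N
  | Y : KZBGen N
  | t : ZMod N × ZMod N → KZBGen N

/-- The verification that the derivation `δ_{m,α}` is well defined on `𝔭_N`: in the free
Lie algebra over `ℚ` on `X`, `Y`, `t_β` (`β ∈ (ℤ/Nℤ)²`), for every `α` and `m ≥ 0`,
`[X, ∑_{j+k=m−1} ∑_β (−1)^j [(ad X)^j t_β, (ad X)^k t_{α+β}]]
  = ∑_β [t_β, (ad X)^m t_{β+α} + (−1)^m (ad X)^m t_{β−α}]`. -/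
theorem deltaWellDefined (N : ℕ) [NeZero N] (α : ZMod N × ZMod N) (m : ℕ) :
    ⁅of ℚ (KZBGen.X : KZBGen N),
      ∑ j ∈ Finset.range m, ∑ β : ZMod N × ZMod N,
        ((-1 : ℚ) ^ j) •
          ⁅((LieAlgebra.ad ℚ (FreeLieAlgebra ℚ (KZBGen N)) (of ℚ KZBGen.X)) ^ j)
              (of ℚ (KZBGen.t β)),
            ((LieAlgebra.ad ℚ (FreeLieAlgebra ℚ (KZBGen N)) (of ℚ KZBGen.X)) ^ (m - 1 - j))
              (of ℚ (KZBGen.t (α + β)))⁆⁆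
      = ∑ β : ZMod N × ZMod N,
          ⁅of ℚ (KZBGen.t β),
            ((LieAlgebra.ad ℚ (FreeLieAlgebra ℚ (KZBGen N)) (of ℚ KZBGen.X)) ^ m)
                (of ℚ (KZBGen.t (β + α)))
              + ((-1 : ℚ) ^ m) •
                ((LieAlgebra.ad ℚ (FreeLieAlgebra ℚ (KZBGen N)) (of ℚ KZBGen.X)) ^ m)
                  (of ℚ (KZBGen.t (β - α)))⁆ := by
  set D := LieAlgebra.ad ℚ (FreeLieAlgebra ℚ (KZBGen N)) (of ℚ KZBGen.X) with hD
  set g : ℕ → FreeLieAlgebra ℚ (KZBGen N) := fun j =>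
    ∑ β : ZMod N × ZMod N, ((-1 : ℚ) ^ j) •
      ⁅(D ^ j) (of ℚ (KZBGen.t β)), (D ^ (m - j)) (of ℚ (KZBGen.t (α + β)))⁆ with hg
  have hbr : ∀ w, ⁅of ℚ (KZBGen.X : KZBGen N), w⁆ = D w := fun w => rfl
  rw [hbr, map_sum]
  have step1 : ∀ j ∈ Finset.range m,
      D (∑ β : ZMod N × ZMod N, ((-1 : ℚ) ^ j) •
        ⁅(D ^ j) (of ℚ (KZBGen.t β)), (D ^ (m - 1 - j)) (of ℚ (KZBGen.t (α + β)))⁆)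
      = g j - g (j + 1) := by
    intro j hj
    rw [Finset.mem_range] at hj
    rw [map_sum, hg]
    simp only
    rw [← Finset.sum_sub_distrib]
    refine Finset.sum_congr rfl fun β _ => ?_
    rw [map_smul]
    have hDl : D ⁅(D ^ j) (of ℚ (KZBGen.t β)),
        (D ^ (m - 1 - j)) (of ℚ (KZBGen.t (α + β)))⁆
        = ⁅(D ^ (j + 1)) (of ℚ (KZBGen.t β)),
            (D ^ (m - 1 - j)) (of ℚ (KZBGen.t (α + β)))⁆
          + ⁅(D ^ j) (of ℚ (KZBGen.t β)),
            (D ^ (m - j)) (of ℚ (KZBGen.t (α + β)))⁆ := by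
      have h1 : (m : ℕ) - j = (m - 1 - j) + 1 := by omega
      have hder : ∀ a b : FreeLieAlgebra ℚ (KZBGen N),
          D ⁅a, b⁆ = ⁅D a, b⁆ + ⁅a, D b⁆ := by
        intro a b; simp only [← hbr]; exact leibniz_lie _ a b
      rw [h1, pow_succ', pow_succ', Module.End.mul_apply, Module.End.mul_apply]
      exact hder _ _
    rw [hDl, smul_add]
    have h2 : (m : ℕ) - 1 - j = m - (j + 1) := by omega
    rw [h2]
    have h3 : ((-1 : ℚ) ^ j) • ⁅(D ^ (j + 1)) (of ℚ (KZBGen.t β)),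
        (D ^ (m - (j+1))) (of ℚ (KZBGen.t (α + β)))⁆
        = -(((-1 : ℚ) ^ (j+1)) • ⁅(D ^ (j + 1)) (of ℚ (KZBGen.t β)),
        (D ^ (m - (j+1))) (of ℚ (KZBGen.t (α + β)))⁆) := by
      rw [← neg_smul, pow_succ]
      ring_nf
    rw [h3]
    abel
  rw [Finset.sum_congr rfl step1, Finset.sum_range_sub']
  have hg0 : g 0 = ∑ β : ZMod N × ZMod N,
      ⁅of ℚ (KZBGen.t β), (D ^ m) (of ℚ (KZBGen.t (β + α)))⁆ := by
    rw [hg]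
    refine Finset.sum_congr rfl fun β _ => ?_
    rw [pow_zero, one_smul, pow_zero, Nat.sub_zero, add_comm α β]
    rfl
  have hsk : ∀ (a b : FreeLieAlgebra ℚ (KZBGen N)) (c : ℚ),
      c • ⁅a, b⁆ = -(c • ⁅b, a⁆) := by
    intro a b c; rw [← smul_neg, lie_skew]
  have hgm : g m = -∑ β : ZMod N × ZMod N, ((-1 : ℚ) ^ m) •
      ⁅of ℚ (KZBGen.t β), (D ^ m) (of ℚ (KZBGen.t (β - α)))⁆ := by
    rw [hg, ← Finset.sum_neg_distrib]
    rw [← Equiv.sum_comp (Equiv.addRight α) (fun β => -(((-1 : ℚ) ^ m) •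
      ⁅of ℚ (KZBGen.t β), (D ^ m) (of ℚ (KZBGen.t (β - α)))⁆))]
    refine Finset.sum_congr rfl fun β _ => ?_
    simp only [Equiv.coe_addRight, Nat.sub_self, pow_zero, Module.End.one_apply,
      add_sub_cancel_right]
    rw [add_comm β α, hsk]
  rw [hg0, hgm, sub_neg_eq_add, ← Finset.sum_add_distrib]
  refine Finset.sum_congr rfl fun β _ => ?_
  rw [lie_add, lie_smul]
end

section
/- Let n ≥ 1 and let A : ℝ → M_n(ℂ) be a continuous matrix-valued function on [0,1]. Let T : ℝ → M_n(ℂ) satisfy T(0) = I and T'(t) = −A(t)·T(t) for t ∈ [0,1]. Then T(1) is invertible and T(1)^{−1} = ∑_{m=0}^∞ ∫_{0 ≤ t₁ ≤ ⋯ ≤ t_m ≤ 1} A(t₁)·A(t₂)⋯A(t_m) dt₁⋯dt_m, where the m = 0 term is the identity matrix and the series converges in M_n(ℂ). (Chen's formula: the inverse parallel transport of the connection d + A(t)dt along [0,1] is the sum of the iterated integrals of A.) -/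
open Complex MeasureTheory intervalIntegral

attribute [local instance] Matrix.linftyOpNormedAddCommGroup Matrix.linftyOpNormedSpace
  Matrix.linftyOpNormedRing Matrix.linftyOpNormedAlgebra

/-- The iterated integral `∫_{0 ≤ t₁ ≤ ⋯ ≤ t_m ≤ s} A(t₁)⋯A(t_m) dt₁⋯dt_m`, defined
recursively: the `m = 0` term is the identity matrix, and
`I_{m+1}(s) = ∫_0^s I_m(t)·A(t) dt`. -/
noncomputable def iterInt {n : ℕ} (A : ℝ → Matrix (Fin n) (Fin n) ℂ) :
    ℕ → ℝ → Matrix (Fin n) (Fin n) ℂ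
  | 0, _ => 1
  | m + 1, s => ∫ t in (0 : ℝ)..s, iterInt A m t * A t

section ChenAux

variable {n : ℕ}

local instance : CompleteSpace (Matrix (Fin n) (Fin n) ℂ) := FiniteDimensional.complete ℂ _

local instance : TopologicalSpace.PseudoMetrizableSpace (Matrix (Fin n) (Fin n) ℂ) :=
  inferInstanceAs (TopologicalSpace.PseudoMetrizableSpace (Fin n → Fin n → ℂ))

private lemma hasDerivAt_primitive {f : ℝ → Matrix (Fin n) (Fin n) ℂ} (hf : Continuous f)
    (t : ℝ) : HasDerivAt (fun s => ∫ u in (0:ℝ)..s, f u) (f t) t :=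
  intervalIntegral.integral_hasDerivAt_right (hf.intervalIntegrable 0 t)
    (hf.stronglyMeasurable.stronglyMeasurableAtFilter) hf.continuousAt

private lemma iterInt_succ_eq (A : ℝ → Matrix (Fin n) (Fin n) ℂ) (m : ℕ) :
    iterInt A (m + 1) = fun s => ∫ t in (0:ℝ)..s, iterInt A m t * A t := by
  funext s; simp [iterInt]

private lemma iterInt_continuous {A : ℝ → Matrix (Fin n) (Fin n) ℂ} (hA : Continuous A)
    (m : ℕ) : Continuous (iterInt A m) := by
  induction m with
  | zero => simpa [iterInt] using continuous_const
  | succ m ih =>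
    rw [iterInt_succ_eq]
    exact continuous_iff_continuousAt.2 fun t => (hasDerivAt_primitive (ih.mul hA) t).continuousAt

private lemma iterInt_hasDerivAt {A : ℝ → Matrix (Fin n) (Fin n) ℂ} (hA : Continuous A) (m : ℕ)
    (t : ℝ) : HasDerivAt (iterInt A (m + 1)) (iterInt A m t * A t) t := by
  rw [iterInt_succ_eq]
  exact hasDerivAt_primitive ((iterInt_continuous hA m).mul hA) t

private lemma iterInt_congr {A B : ℝ → Matrix (Fin n) (Fin n) ℂ}
    (h : ∀ t ∈ Set.Icc (0:ℝ) 1, A t = B t) (m : ℕ) :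
    ∀ s ∈ Set.Icc (0:ℝ) 1, iterInt A m s = iterInt B m s := by
  induction m with
  | zero => intro s _; simp [iterInt]
  | succ m ih =>
    intro s hs
    simp only [iterInt]
    apply intervalIntegral.integral_congr
    intro t ht
    rw [Set.uIcc_of_le hs.1] at ht
    have ht1 : t ∈ Set.Icc (0:ℝ) 1 := ⟨ht.1, ht.2.trans hs.2⟩
    show iterInt A m t * A t = iterInt B m t * B t
    rw [ih t ht1, h t ht1]

private lemma iterInt_norm_le {A : ℝ → Matrix (Fin n) (Fin n) ℂ} (hA : Continuous A) {M : ℝ}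
    (hM : ∀ t ∈ Set.Icc (0:ℝ) 1, ‖A t‖ ≤ M) (hM0 : 0 ≤ M) (m : ℕ) :
    ∀ s ∈ Set.Icc (0:ℝ) 1,
      ‖iterInt A m s‖ ≤ ‖(1 : Matrix (Fin n) (Fin n) ℂ)‖ * (M * s) ^ m / m.factorial := by
  set C := ‖(1 : Matrix (Fin n) (Fin n) ℂ)‖ with hC
  have hC0 : 0 ≤ C := norm_nonneg _
  induction m with
  | zero =>
    intro s _
    simp only [iterInt, pow_zero, Nat.factorial_zero, Nat.cast_one, mul_one, div_one, le_refl]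
    exact le_of_eq hC.symm
  | succ m ih =>
    intro s hs
    have hs0 : (0:ℝ) ≤ s := hs.1
    have key : ∀ t ∈ Set.Icc (0:ℝ) s, ‖iterInt A m t * A t‖ ≤
        (C * M ^ (m+1) / m.factorial) * t ^ m := by
      intro t ht
      have ht1 : t ∈ Set.Icc (0:ℝ) 1 := ⟨ht.1, ht.2.trans hs.2⟩
      calc ‖iterInt A m t * A t‖ ≤ ‖iterInt A m t‖ * ‖A t‖ := norm_mul_le _ _
        _ ≤ (C * (M * t) ^ m / m.factorial) * M := by
            have hMt : (0:ℝ) ≤ M * t := mul_nonneg hM0 ht1.1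
            apply mul_le_mul (ih t ht1) (hM t ht1) (norm_nonneg _)
            positivity
        _ = (C * M ^ (m+1) / m.factorial) * t ^ m := by ring
    have hint1 : IntervalIntegrable (fun t => ‖iterInt A m t * A t‖) volume 0 s :=
      (((iterInt_continuous hA m).mul hA).norm).intervalIntegrable 0 s
    have hint2 : IntervalIntegrable (fun t => (C * M ^ (m+1) / m.factorial) * t ^ m)
        volume 0 s := (continuous_const.mul (continuous_pow m)).intervalIntegrable 0 s
    calc ‖iterInt A (m+1) s‖
        = ‖∫ t in (0:ℝ)..s, iterInt A m t * A t‖ := by rw [iterInt_succ_eq]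
      _ ≤ ∫ t in (0:ℝ)..s, ‖iterInt A m t * A t‖ :=
          intervalIntegral.norm_integral_le_integral_norm hs0
      _ ≤ ∫ t in (0:ℝ)..s, (C * M ^ (m+1) / m.factorial) * t ^ m :=
          intervalIntegral.integral_mono_on hs0 hint1 hint2 key
      _ = (C * M ^ (m+1) / m.factorial) * (s ^ (m+1) / (m+1)) := by
          rw [intervalIntegral.integral_const_mul, integral_pow]
          ring
      _ = C * (M * s) ^ (m+1) / (m+1).factorial := by
          rw [Nat.factorial_succ]
          have h1 : (m.factorial : ℝ) ≠ 0 := by positivity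
          push_cast
          field_simp
          ring

private lemma telescope_hasDerivAt {A T : ℝ → Matrix (Fin n) (Fin n) ℂ} (hA : Continuous A)
    (hT : ∀ t ∈ Set.Icc (0:ℝ) 1, HasDerivAt T (-(A t) * T t) t) (N : ℕ) :
    ∀ t ∈ Set.Icc (0:ℝ) 1,
      HasDerivAt (fun s => ∑ m ∈ Finset.range (N + 1), iterInt A m s * T s)
        (-(iterInt A N t * (A t * T t))) t := by
  induction N with
  | zero =>
    intro t ht
    have h1 : (fun s => ∑ m ∈ Finset.range 1, iterInt A m s * T s) = fun s => T s := by
      funext s; simp [iterInt, one_mul]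
    rw [h1]
    convert hT t ht using 1
    simp [iterInt, neg_mul]
  | succ N ih =>
    intro t ht
    have h1 : (fun s => ∑ m ∈ Finset.range (N + 2), iterInt A m s * T s) =
        fun s => (∑ m ∈ Finset.range (N + 1), iterInt A m s * T s) +
          iterInt A (N + 1) s * T s := by
      funext s; rw [Finset.sum_range_succ]
    rw [h1]
    have h3 := (ih t ht).add ((iterInt_hasDerivAt hA N t).mul (hT t ht))
    refine HasDerivAt.congr_deriv h3 ?_
    noncomm_ring

end ChenAux

/-- Chen's formula: if `A : [0,1] → Mₙ(ℂ)` is continuous and `T` solves the parallel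
transport equation `T(0) = I`, `T'(t) = −A(t)T(t)` on `[0,1]`, then the series of iterated
integrals `∑_m ∫_{0 ≤ t₁ ≤ ⋯ ≤ t_m ≤ 1} A(t₁)⋯A(t_m)` converges, `T(1)` is invertible, and
its inverse is the sum of that series. -/
theorem chen_formula (n : ℕ) (hn : 1 ≤ n) (A T : ℝ → Matrix (Fin n) (Fin n) ℂ)
    (hA : ContinuousOn A (Set.Icc 0 1))
    (hT0 : T 0 = 1)
    (hT : ∀ t ∈ Set.Icc (0 : ℝ) 1, HasDerivAt T (-(A t) * T t) t) :
    Summable (fun m : ℕ => iterInt A m 1) ∧ IsUnit (T 1) ∧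
      (T 1)⁻¹ = ∑' m : ℕ, iterInt A m 1 := by
  classical
  haveI : CompleteSpace (Matrix (Fin n) (Fin n) ℂ) := FiniteDimensional.complete ℂ _
  set A' : ℝ → Matrix (Fin n) (Fin n) ℂ :=
    Set.IccExtend zero_le_one ((Set.Icc (0:ℝ) 1).restrict A) with hA'def
  have hA'eq : ∀ t ∈ Set.Icc (0:ℝ) 1, A' t = A t := by
    intro t ht
    rw [hA'def, Set.IccExtend_of_mem zero_le_one _ ht]
    rfl
  have hA' : Continuous A' := (ContinuousOn.restrict hA).Icc_extend'
  have hT' : ∀ t ∈ Set.Icc (0:ℝ) 1, HasDerivAt T (-(A' t) * T t) t := by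
    intro t ht; rw [hA'eq t ht]; exact hT t ht
  obtain ⟨M, hM⟩ := isCompact_Icc.exists_bound_of_continuousOn hA
  have hM' : ∀ t ∈ Set.Icc (0:ℝ) 1, ‖A' t‖ ≤ M := by
    intro t ht; rw [hA'eq t ht]; exact hM t ht
  have hM0 : (0:ℝ) ≤ M := le_trans (norm_nonneg _) (hM 0 ⟨le_refl _, zero_le_one⟩)
  set C := ‖(1 : Matrix (Fin n) (Fin n) ℂ)‖ with hCdef
  have hC0 : (0:ℝ) ≤ C := norm_nonneg _
  have h01 : (1:ℝ) ∈ Set.Icc (0:ℝ) 1 := ⟨zero_le_one, le_refl _⟩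
  have hbound := iterInt_norm_le hA' hM' hM0
  -- Summability
  have hsum' : Summable (fun m => iterInt A' m 1) := by
    apply Summable.of_norm_bounded (g := fun m => C * (M ^ m / m.factorial))
    · exact (Real.summable_pow_div_factorial M).mul_left C
    · intro m
      have := hbound m 1 h01
      rw [mul_one] at this
      calc ‖iterInt A' m 1‖ ≤ C * M ^ m / m.factorial := this
        _ = C * (M ^ m / m.factorial) := by ring
  have hfeq : (fun m : ℕ => iterInt A m 1) = fun m : ℕ => iterInt A' m 1 := by
    funext m
    exact iterInt_congr (fun t ht => (hA'eq t ht).symm) m 1 h01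
  -- Continuity and bound on T
  have hTc : ContinuousOn T (Set.Icc 0 1) :=
    fun t ht => (hT t ht).continuousAt.continuousWithinAt
  obtain ⟨K, hK⟩ := isCompact_Icc.exists_bound_of_continuousOn hTc
  have hK0 : (0:ℝ) ≤ K := le_trans (norm_nonneg _) (hK 0 ⟨le_refl _, zero_le_one⟩)
  -- Key partial-sum identity
  have key : ∀ N : ℕ, (∑ m ∈ Finset.range (N+1), iterInt A' m 1) * T 1 =
      1 - ∫ t in (0:ℝ)..1, iterInt A' N t * (A' t * T t) := by
    intro N
    have hint : @IntervalIntegrable (Matrix (Fin n) (Fin n) ℂ)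
        Matrix.linftyOpNormedAddCommGroup.toPseudoMetricSpace.toUniformSpace.toTopologicalSpace _
        (fun t => -(iterInt A' N t * (A' t * T t))) volume 0 1 := by
      apply ContinuousOn.intervalIntegrable
      rw [Set.uIcc_of_le zero_le_one]
      exact (((iterInt_continuous hA' N).continuousOn).mul (hA'.continuousOn.mul hTc)).neg
    have hftc := intervalIntegral.integral_eq_sub_of_hasDerivAt
      (f := fun s => ∑ m ∈ Finset.range (N+1), iterInt A' m s * T s)
      (f' := fun t => -(iterInt A' N t * (A' t * T t)))
      (fun t ht => by
        rw [Set.uIcc_of_le zero_le_one] at ht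
        exact telescope_hasDerivAt hA' hT' N t ht) hint
    rw [intervalIntegral.integral_neg] at hftc
    have hΦ0 : (∑ m ∈ Finset.range (N+1), iterInt A' m 0 * T 0) = 1 := by
      rw [Finset.sum_eq_single 0]
      · simp [iterInt, hT0]
      · intro m _ hm0
        obtain ⟨k, rfl⟩ := Nat.exists_eq_succ_of_ne_zero hm0
        simp [iterInt, intervalIntegral.integral_same]
      · intro h; exact absurd (Finset.mem_range.2 (Nat.succ_pos N)) h
    have hftc2 : (-∫ t in (0:ℝ)..1, iterInt A' N t * (A' t * T t)) =
        (∑ m ∈ Finset.range (N+1), iterInt A' m 1 * T 1) -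
          ∑ m ∈ Finset.range (N+1), iterInt A' m 0 * T 0 := hftc
    rw [hΦ0] at hftc2
    rw [Finset.sum_mul]
    have h4 : (∑ m ∈ Finset.range (N+1), iterInt A' m 1 * T 1) - 1 =
        -∫ t in (0:ℝ)..1, iterInt A' N t * (A' t * T t) := hftc2.symm
    rw [sub_eq_iff_eq_add] at h4
    rw [h4]
    abel
  -- Limits
  have hpartial : Filter.Tendsto
      (fun N => (∑ m ∈ Finset.range (N+1), iterInt A' m 1) * T 1)
      Filter.atTop (nhds ((∑' m : ℕ, iterInt A' m 1) * T 1)) := by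
    have h1 := hsum'.hasSum.tendsto_sum_nat
    have h2 := h1.comp (Filter.tendsto_add_atTop_nat 1)
    exact h2.mul tendsto_const_nhds
  have hrem : Filter.Tendsto
      (fun N => ∫ t in (0:ℝ)..1, iterInt A' N t * (A' t * T t))
      Filter.atTop (nhds 0) := by
    apply squeeze_zero_norm (a := fun N => (C * (M * K)) * (M ^ N / N.factorial))
    · intro N
      have hb : ∀ x ∈ Set.uIoc (0:ℝ) 1,
          ‖iterInt A' N x * (A' x * T x)‖ ≤ (C * M ^ N / N.factorial) * (M * K) := by
        intro x hx
        rw [Set.uIoc_of_le zero_le_one] at hx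
        have hx1 : x ∈ Set.Icc (0:ℝ) 1 := ⟨le_of_lt hx.1, hx.2⟩
        have hxa : ‖iterInt A' N x‖ ≤ C * M ^ N / N.factorial := by
          refine le_trans (hbound N x hx1) ?_
          have hMx : (0:ℝ) ≤ M * x := mul_nonneg hM0 hx1.1
          have hle : M * x ≤ M := by nlinarith [hx1.2]
          have hpow := pow_le_pow_left₀ hMx hle N
          have hnum : ‖(1 : Matrix (Fin n) (Fin n) ℂ)‖ * (M * x) ^ N ≤ C * M ^ N :=
            mul_le_mul_of_nonneg_left hpow hC0
          exact (div_le_div_iff_of_pos_right (by positivity)).mpr hnum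
        have hxb : ‖A' x * T x‖ ≤ M * K := by
          refine le_trans (norm_mul_le _ _) ?_
          exact mul_le_mul (hM' x hx1) (hK x hx1) (norm_nonneg _) hM0
        calc ‖iterInt A' N x * (A' x * T x)‖
            ≤ ‖iterInt A' N x‖ * ‖A' x * T x‖ := norm_mul_le _ _
          _ ≤ (C * M ^ N / N.factorial) * (M * K) := by
              apply mul_le_mul hxa hxb (norm_nonneg _)
              positivity
      have := intervalIntegral.norm_integral_le_of_norm_le_const hb
      simp only [sub_zero, abs_one, mul_one] at this
      refine this.trans_eq ?_
      ring
    · have h0 := (FloorSemiring.tendsto_pow_div_factorial_atTop (K := ℝ) M).const_mul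
        (C * (M * K))
      simpa using h0
  have hBT : (∑' m : ℕ, iterInt A' m 1) * T 1 = 1 := by
    have h5 : Filter.Tendsto
        (fun N => (∑ m ∈ Finset.range (N+1), iterInt A' m 1) * T 1)
        Filter.atTop (nhds ((1 : Matrix (Fin n) (Fin n) ℂ) - 0)) := by
      have := (tendsto_const_nhds (x := (1 : Matrix (Fin n) (Fin n) ℂ))
        (f := Filter.atTop (α := ℕ))).sub hrem
      exact this.congr fun N => (key N).symm
    have := tendsto_nhds_unique hpartial h5
    simpa using this
  have hTB : T 1 * (∑' m : ℕ, iterInt A' m 1) = 1 := mul_eq_one_comm.mp hBT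
  refine ⟨by rw [hfeq]; exact hsum', ⟨⟨T 1, ∑' m : ℕ, iterInt A' m 1, hTB, hBT⟩, rfl⟩, ?_⟩
  have : (∑' m : ℕ, iterInt A m 1) = ∑' m : ℕ, iterInt A' m 1 := by rw [hfeq]
  rw [this]
  exact Matrix.inv_eq_left_inv hBT
end

section
/- Let m ≥ 3 be an integer, N ≥ 1, x_α a rational with N·x_α ∈ ℤ, ζ = e^{2πi x_α}, and γ = [[a,b],[c,d]] ∈ SL₂(ℤ). Then the function τ ↦ (cτ+d)^{−m} · G_{m,ζ}((aτ+b)/(cτ+d)) tends to ∑_{k ∈ ℤ ∖ {0}} ζ^{−ck}/k^m as Im τ → ∞. -/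
open Complex Filter
open scoped MatrixGroups


def eisProdEquiv (a b c d : ℤ) (h : a * d - b * c = 1) : ℤ × ℤ ≃ ℤ × ℤ where
  toFun p := (p.1 * a + p.2 * c, p.1 * b + p.2 * d)
  invFun q := (q.1 * d - q.2 * c, -(q.1 * b) + q.2 * a)
  left_inv p := by
    obtain ⟨p1, p2⟩ := p
    simp only [Prod.mk.injEq]
    exact ⟨by linear_combination p1 * h, by linear_combination p2 * h⟩
  right_inv q := by
    obtain ⟨q1, q2⟩ := q
    simp only [Prod.mk.injEq]
    exact ⟨by linear_combination q1 * h, by linear_combination q2 * h⟩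

lemma eisProdEquiv_zero (a b c d : ℤ) (h : a * d - b * c = 1) :
    eisProdEquiv a b c d h 0 = 0 := by simp [eisProdEquiv]

lemma eisProdEquiv_ne_zero (a b c d : ℤ) (h : a * d - b * c = 1) (p : ℤ × ℤ) :
    p ≠ 0 ↔ eisProdEquiv a b c d h p ≠ 0 := by
  rw [not_iff_not]
  constructor
  · rintro rfl; exact eisProdEquiv_zero a b c d h
  · intro hq
    exact (eisProdEquiv a b c d h).injective (hq.trans (eisProdEquiv_zero a b c d h).symm)

/-- The `Γ₁(N)` Eisenstein series `G_{m,ζ}(τ) = ∑_{(k,ℓ) ≠ (0,0)} ζ^k/(kτ+ℓ)^m`. -/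
noncomputable def eisGzeta (m : ℕ) (ζ : ℂ) (τ : UpperHalfPlane) : ℂ :=
  ∑' p : {p : ℤ × ℤ // p ≠ 0},
    ζ ^ (p.1.1) / ((p.1.1 : ℂ) * (τ : ℂ) + (p.1.2 : ℂ)) ^ m

def eisSubEquiv (a b c d : ℤ) (h : a * d - b * c = 1) :
    {p : ℤ × ℤ // p ≠ 0} ≃ {p : ℤ × ℤ // p ≠ 0} :=
  (eisProdEquiv a b c d h).subtypeEquiv (eisProdEquiv_ne_zero a b c d h)

lemma eis_aux (x W z : ℂ) (hx : x ≠ 0) (m : ℕ) :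
    x ^ (-(m:ℤ)) * (z / (W / x) ^ m) = z / W ^ m := by
  rw [div_pow, div_div_eq_mul_div, zpow_neg, zpow_natCast]
  calc (x ^ m)⁻¹ * (z * x ^ m / W ^ m) = (x ^ m)⁻¹ * x ^ m * (z / W ^ m) := by ring
    _ = z / W ^ m := by rw [inv_mul_cancel₀ (pow_ne_zero _ hx), one_mul]

lemma key_eq (m : ℕ) (ζ : ℂ) (γ : SL(2,ℤ)) (τ : UpperHalfPlane) :
    (((γ : Matrix (Fin 2) (Fin 2) ℤ) 1 0 : ℂ) * (τ : ℂ)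
        + ((γ : Matrix (Fin 2) (Fin 2) ℤ) 1 1 : ℂ)) ^ (-(m : ℤ)) * eisGzeta m ζ (γ • τ)
      = ∑' p : {p : ℤ × ℤ // p ≠ 0},
          ζ ^ (p.1.1 * (γ : Matrix (Fin 2) (Fin 2) ℤ) 1 1
              - p.1.2 * (γ : Matrix (Fin 2) (Fin 2) ℤ) 1 0)
            / ((p.1.1 : ℂ) * (τ : ℂ) + (p.1.2 : ℂ)) ^ m := by
  set a : ℤ := (γ : Matrix (Fin 2) (Fin 2) ℤ) 0 0 with ha
  set b : ℤ := (γ : Matrix (Fin 2) (Fin 2) ℤ) 0 1 with hb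
  set c : ℤ := (γ : Matrix (Fin 2) (Fin 2) ℤ) 1 0 with hc
  set d : ℤ := (γ : Matrix (Fin 2) (Fin 2) ℤ) 1 1 with hd
  have hdet : a * d - b * c = 1 := by
    have := γ.2
    rw [Matrix.det_fin_two] at this
    linarith
  have hD : ((c : ℂ) * (τ : ℂ) + (d : ℂ)) ≠ 0 := by
    have h1 := UpperHalfPlane.denom_ne_zero γ τ
    rwa [ModularGroup.denom_apply] at h1
  have hγτ : ((γ • τ : UpperHalfPlane) : ℂ)
      = ((a : ℂ) * (τ : ℂ) + (b : ℂ)) / ((c : ℂ) * (τ : ℂ) + (d : ℂ)) := by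
    rw [UpperHalfPlane.specialLinearGroup_apply]
    simp [ha, hb, hc, hd]
  rw [eisGzeta, ← tsum_mul_left]
  rw [← (eisSubEquiv a b c d hdet).tsum_eq (fun p : {p : ℤ × ℤ // p ≠ 0} =>
      ζ ^ (p.1.1 * d - p.1.2 * c) / ((p.1.1 : ℂ) * (τ : ℂ) + (p.1.2 : ℂ)) ^ m)]
  apply tsum_congr
  rintro ⟨⟨p1, p2⟩, hp⟩
  simp only [eisSubEquiv, Equiv.subtypeEquiv_apply, eisProdEquiv, Equiv.coe_fn_mk]
  have hexp : (p1 * a + p2 * c) * d - (p1 * b + p2 * d) * c = p1 := by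
    linear_combination p1 * hdet
  rw [hexp, hγτ]
  have hW : (p1 : ℂ) * (((a : ℂ) * (τ:ℂ) + (b:ℂ)) / ((c:ℂ) * (τ:ℂ) + (d:ℂ))) + (p2 : ℂ)
      = (((p1 * a + p2 * c : ℤ) : ℂ) * (τ:ℂ) + ((p1 * b + p2 * d : ℤ) : ℂ))
          / ((c:ℂ) * (τ:ℂ) + (d:ℂ)) := by
    rw [eq_div_iff hD, add_mul, mul_assoc, div_mul_cancel₀ _ hD]
    push_cast
    ring
  rw [hW, eis_aux _ _ _ hD]

lemma Fser_periodic (m : ℕ) (ζ : ℂ) (hζ : ζ ≠ 0) (N : ℕ) (hζN : ζ ^ (N : ℤ) = 1)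
    (c d n : ℤ) (τ : UpperHalfPlane) :
    (∑' p : {p : ℤ × ℤ // p ≠ 0},
        ζ ^ (p.1.1 * d - p.1.2 * c)
          / ((p.1.1 : ℂ) * (((((N : ℤ) * n : ℤ) : ℝ)) +ᵥ τ : UpperHalfPlane) + (p.1.2 : ℂ)) ^ m)
      = ∑' p : {p : ℤ × ℤ // p ≠ 0},
          ζ ^ (p.1.1 * d - p.1.2 * c) / ((p.1.1 : ℂ) * (τ : ℂ) + (p.1.2 : ℂ)) ^ m := by
  rw [← (eisSubEquiv 1 ((N : ℤ) * n) 0 1 (by ring)).tsum_eq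
    (fun p : {p : ℤ × ℤ // p ≠ 0} =>
      ζ ^ (p.1.1 * d - p.1.2 * c) / ((p.1.1 : ℂ) * (τ : ℂ) + (p.1.2 : ℂ)) ^ m)]
  apply tsum_congr
  rintro ⟨⟨p1, p2⟩, hp⟩
  simp only [eisSubEquiv, Equiv.subtypeEquiv_apply, eisProdEquiv, Equiv.coe_fn_mk]
  have hexp : (p1 * 1 + p2 * 0) * d - (p1 * ((N : ℤ) * n) + p2 * 1) * c
      = (p1 * d - p2 * c) + (N : ℤ) * (-(p1 * n * c)) := by ring
  rw [hexp, zpow_add₀ hζ, zpow_mul, hζN, one_zpow, mul_one]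
  congr 1
  rw [UpperHalfPlane.coe_vadd]
  push_cast
  ring

open UpperHalfPlane EisensteinSeries in
lemma Fser_tendsto (m : ℕ) (hm : 3 ≤ m) (ζ : ℂ) (hζ : ζ ≠ 0) (habs : ‖ζ‖ = 1)
    (N : ℕ) (hN : 1 ≤ N) (hζN : ζ ^ (N : ℤ) = 1) (c d : ℤ) :
    Tendsto (fun τ : UpperHalfPlane => ∑' p : {p : ℤ × ℤ // p ≠ 0},
        ζ ^ (p.1.1 * d - p.1.2 * c) / ((p.1.1 : ℂ) * (τ : ℂ) + (p.1.2 : ℂ)) ^ m)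
      UpperHalfPlane.atImInfty
      (nhds (∑' k : {k : ℤ // k ≠ 0}, ζ ^ (-(c * (k : ℤ))) / ((k : ℤ) : ℂ) ^ m)) := by
  set f : UpperHalfPlane → {p : ℤ × ℤ // p ≠ 0} → ℂ := fun τ p =>
    ζ ^ (p.1.1 * d - p.1.2 * c) / ((p.1.1 : ℂ) * (τ : ℂ) + (p.1.2 : ℂ)) ^ m with hf
  set g : {p : ℤ × ℤ // p ≠ 0} → ℂ := fun p =>
    if p.1.1 = 0 then ζ ^ (-(c * p.1.2)) / ((p.1.2 : ℤ) : ℂ) ^ m else 0 with hg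
  set S : Set UpperHalfPlane := verticalStrip N 1 with hS
  set l : Filter UpperHalfPlane := UpperHalfPlane.atImInfty ⊓ Filter.principal S with hl
  -- the sum of the limits
  have hgL : ∑' p, g p = ∑' k : {k : ℤ // k ≠ 0}, ζ ^ (-(c * (k : ℤ))) / ((k : ℤ) : ℂ) ^ m := by
    have hi : Function.Injective (fun k : {k : ℤ // k ≠ 0} =>
        (⟨((0 : ℤ), (k : ℤ)), by simp [Prod.ext_iff, k.2]⟩ : {p : ℤ × ℤ // p ≠ 0})) := by
      intro k k' h
      simpa [Subtype.ext_iff, Prod.ext_iff] using h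
    rw [← hi.tsum_eq]
    · apply tsum_congr
      intro k
      simp [hg]
    · intro p hp
      have h0 : p.1.1 = 0 := by
        by_contra h0
        exact hp (by simp [hg, h0])
      have h2 : p.1.2 ≠ 0 := fun h2 => p.2 (Prod.ext h0 h2)
      exact ⟨⟨p.1.2, h2⟩, Subtype.ext (Prod.ext h0.symm rfl)⟩
  rw [← hgL]
  -- the dominated convergence on the strip
  have hmain : Tendsto (fun τ => ∑' p, f τ p) l (nhds (∑' p, g p)) := by
    apply tendsto_tsum_of_dominated_convergence
      (bound := fun p : {p : ℤ × ℤ // p ≠ 0} =>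
        r ⟨⟨(N : ℝ), 1⟩, one_pos⟩ ^ (-(m : ℝ)) * ‖![p.1.1, p.1.2]‖ ^ (-(m : ℝ)))
    · -- summability of the bound
      apply Summable.mul_left
      have hsum : Summable fun x : Fin 2 → ℤ => ‖x‖ ^ (-(m : ℝ)) :=
        summable_one_div_norm_rpow (by norm_cast)
      apply hsum.comp_injective
      intro p q h
      have h0 := congrFun h 0
      have h1 := congrFun h 1
      simp only [Matrix.cons_val_zero, Matrix.cons_val_one, Matrix.head_cons] at h0 h1
      exact Subtype.ext (Prod.ext h0 h1)
    · -- pointwise limits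
      intro p
      rcases eq_or_ne p.1.1 0 with h0 | h0
      · have : (fun τ : UpperHalfPlane => f τ p) = fun _ => g p := by
          funext τ
          simp [hf, hg, h0, mul_comm]
        rw [this]
        exact tendsto_const_nhds
      · have hgp : g p = 0 := by simp [hg, h0]
        rw [hgp]
        have h1 : Tendsto (fun τ : UpperHalfPlane => ‖((p.1.1 : ℂ) * (τ : ℂ) + (p.1.2 : ℂ))‖)
            UpperHalfPlane.atImInfty atTop := by
          apply tendsto_atTop_mono _ (tendsto_comap (f := UpperHalfPlane.im))
          intro τ
          have him : ((p.1.1 : ℂ) * (τ : ℂ) + (p.1.2 : ℂ)).im = (p.1.1 : ℝ) * τ.im := by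
            simp [Complex.add_im, Complex.mul_im, UpperHalfPlane.coe_im, UpperHalfPlane.coe_re]
          calc τ.im ≤ |(p.1.1 : ℝ)| * τ.im := by
                refine le_mul_of_one_le_left τ.im_pos.le ?_
                rw [← Int.cast_abs]
                exact_mod_cast Int.one_le_abs h0
            _ = |((p.1.1 : ℂ) * (τ : ℂ) + (p.1.2 : ℂ)).im| := by
                rw [him, abs_mul, abs_of_pos τ.im_pos]
            _ ≤ ‖(p.1.1 : ℂ) * (τ : ℂ) + (p.1.2 : ℂ)‖ := Complex.abs_im_le_norm _
        have h2 : Tendsto (fun τ : UpperHalfPlane =>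
            ‖((p.1.1 : ℂ) * (τ : ℂ) + (p.1.2 : ℂ))‖ ^ m) UpperHalfPlane.atImInfty atTop :=
          (tendsto_pow_atTop (by omega)).comp h1
        have h3 : Tendsto (fun τ : UpperHalfPlane => f τ p) UpperHalfPlane.atImInfty (nhds 0) := by
          rw [tendsto_zero_iff_norm_tendsto_zero]
          have : (fun τ : UpperHalfPlane => ‖f τ p‖)
              = fun τ : UpperHalfPlane => ‖ζ ^ (p.1.1 * d - p.1.2 * c)‖ *
                  (‖((p.1.1 : ℂ) * (τ : ℂ) + (p.1.2 : ℂ))‖ ^ m)⁻¹ := by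
            funext τ
            simp [hf, norm_div, div_eq_mul_inv, norm_pow]
          rw [this]
          simpa using h2.inv_tendsto_atTop.const_mul (‖ζ ^ (p.1.1 * d - p.1.2 * c)‖)
        exact h3.mono_left inf_le_left
    · -- the domination on the strip
      rw [hl, Filter.eventually_inf_principal]
      apply Filter.Eventually.of_forall
      intro τ hτ p
      have hζ1 : ‖ζ ^ (p.1.1 * d - p.1.2 * c)‖ = 1 := by
        rw [norm_zpow, habs, one_zpow]
      have hnorm : ‖f τ p‖
          = ‖(((![p.1.1, p.1.2] : Fin 2 → ℤ) 0 : ℂ) * (τ : ℂ)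
              + ((![p.1.1, p.1.2] : Fin 2 → ℤ) 1 : ℂ))‖ ^ (-(m : ℝ)) := by
        rw [hf]
        simp only [norm_div, hζ1, norm_pow]
        rw [Real.rpow_neg (norm_nonneg _), Real.rpow_natCast]
        simp [one_div]
      rw [hnorm]
      exact summand_bound_of_mem_verticalStrip (by positivity) ![p.1.1, p.1.2] one_pos hτ
  -- transfer from the strip to the full filter using periodicity
  rw [Metric.tendsto_nhds] at hmain ⊢
  intro ε hε
  have hev := hmain ε hε
  rw [hl, Filter.eventually_inf_principal] at hev
  simp only [Filter.eventually_iff, UpperHalfPlane.atImInfty_mem, Set.mem_setOf_eq] at hev ⊢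
  obtain ⟨A, hA⟩ := hev
  refine ⟨max A 1, fun τ hτ => ?_⟩
  obtain ⟨n, hn⟩ := ModularGroup_T_zpow_mem_verticalStrip τ (by omega : 0 < N)
  set τ' := ModularGroup.T ^ ((N : ℤ) * n) • τ with hτ'
  have hvadd : τ' = ((((N : ℤ) * n : ℤ) : ℝ)) +ᵥ τ := by
    rw [hτ', UpperHalfPlane.modular_T_zpow_smul]
  have hτ'im : τ'.im = τ.im := by rw [hvadd, UpperHalfPlane.vadd_im]
  have hτ'S : τ' ∈ S := ⟨hn.1, by
    rw [hτ'im]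
    exact le_trans (le_max_right A 1) hτ⟩
  have hFτ' : (∑' p, f τ' p) = ∑' p, f τ p := by
    rw [hf, hvadd]
    exact Fser_periodic m ζ hζ N hζN c d n τ
  rw [← hFτ']
  exact hA τ' (by rw [hτ'im]; exact le_trans (le_max_left A 1) hτ) hτ'S

/-- For `m ≥ 3`, `N ≥ 1`, `x_α ∈ ℚ` with `N x_α ∈ ℤ`, `ζ = e^{2πi x_α}`, and
`γ = [[a,b],[c,d]] ∈ SL₂(ℤ)`, the value of `G_{m,ζ}` at the cusp `γ(i∞)`:
`(cτ+d)^{−m} G_{m,ζ}(γτ) → ∑_{k≠0} ζ^{−ck}/k^m` as `Im τ → ∞`. -/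
theorem eisGzeta_cusp_value (m : ℕ) (hm : 3 ≤ m) (N : ℕ) (hN : 1 ≤ N) (xα : ℚ)
    (hxα : ∃ k : ℤ, (N : ℚ) * xα = (k : ℚ)) (γ : SL(2,ℤ)) :
    Tendsto (fun τ : UpperHalfPlane =>
        (((γ : Matrix (Fin 2) (Fin 2) ℤ) 1 0 : ℂ) * (τ : ℂ)
            + ((γ : Matrix (Fin 2) (Fin 2) ℤ) 1 1 : ℂ)) ^ (-(m : ℤ)) *
          eisGzeta m (Complex.exp (2 * Real.pi * I * (xα : ℂ))) (γ • τ))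
      UpperHalfPlane.atImInfty
      (nhds (∑' k : {k : ℤ // k ≠ 0},
        Complex.exp (2 * Real.pi * I * (xα : ℂ)) ^
            (-((γ : Matrix (Fin 2) (Fin 2) ℤ) 1 0 * (k : ℤ))) /
          ((k : ℤ) : ℂ) ^ m)) := by
  set ζ : ℂ := Complex.exp (2 * Real.pi * I * (xα : ℂ)) with hζdef
  have hζ : ζ ≠ 0 := Complex.exp_ne_zero _
  have habs : ‖ζ‖ = 1 := by
    rw [hζdef, Complex.norm_exp]
    have : (2 * (Real.pi : ℂ) * I * (xα : ℂ)).re = 0 := by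
      simp [Complex.mul_re, Complex.mul_im]
    rw [this, Real.exp_zero]
  have hζN : ζ ^ (N : ℤ) = 1 := by
    obtain ⟨k, hk⟩ := hxα
    have hkC : (N : ℂ) * (xα : ℂ) = (k : ℂ) := by exact_mod_cast congrArg (Rat.cast (K := ℂ)) hk
    rw [hζdef, ← Complex.exp_int_mul]
    rw [show ((N : ℤ) : ℂ) * (2 * (Real.pi : ℂ) * I * (xα : ℂ)) = (k : ℂ) * (2 * Real.pi * I) by
      push_cast
      linear_combination 2 * (Real.pi : ℂ) * I * hkC]
    exact Complex.exp_int_mul_two_pi_mul_I k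
  rw [show (fun τ : UpperHalfPlane =>
        (((γ : Matrix (Fin 2) (Fin 2) ℤ) 1 0 : ℂ) * (τ : ℂ)
            + ((γ : Matrix (Fin 2) (Fin 2) ℤ) 1 1 : ℂ)) ^ (-(m : ℤ)) *
          eisGzeta m ζ (γ • τ))
      = fun τ : UpperHalfPlane => ∑' p : {p : ℤ × ℤ // p ≠ 0},
          ζ ^ (p.1.1 * (γ : Matrix (Fin 2) (Fin 2) ℤ) 1 1
              - p.1.2 * (γ : Matrix (Fin 2) (Fin 2) ℤ) 1 0)
            / ((p.1.1 : ℂ) * (τ : ℂ) + (p.1.2 : ℂ)) ^ m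
      from funext fun τ => key_eq m ζ γ τ]
  exact Fser_tendsto m hm ζ hζ habs N hN hζN
    ((γ : Matrix (Fin 2) (Fin 2) ℤ) 1 0) ((γ : Matrix (Fin 2) (Fin 2) ℤ) 1 1)
end
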